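/- arXiv:2008.03355 — 4 statements merged into one kernel-verified Lean document; each statement's English description precedes it below -/
import Mathlib

section
/- Let h : ℝ → ℝ be antitone (x ≤ y implies h(y) ≤ h(x)) and left continuous (for every c and every monotone increasing sequence x_n → c one has h(x_n) → h(c)). Let D₁ be any real number, define D_{n+1} = h(D_n) for n ≥ 1, and suppose the sequence (D_n) converges to a limit D. Then D is a fixed point of h, i.e., h(D) = D. -/
/-- Let `h : ℝ → ℝ` be antitone and left continuous (in the sense that
`h (x n) → h c` whenever `x` is a monotone increasing sequence tending to `c`). Let `D₁`
be any real number, `D (n+1) = h (D n)` for `n ≥ 1`, and suppose the sequence `(D n)`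
converges to a limit `L`. Then `L` is a fixed point of `h`: `h L = L`. -/
theorem stmt_7 (h : ℝ → ℝ) (hh : Antitone h)
    (hlc : ∀ (c : ℝ) (x : ℕ → ℝ), Monotone x →
      Filter.Tendsto x Filter.atTop (nhds c) →
      Filter.Tendsto (fun n => h (x n)) Filter.atTop (nhds (h c)))
    (D₁ : ℝ) (D : ℕ → ℝ) (hD1 : D 1 = D₁)
    (hrec : ∀ n : ℕ, 1 ≤ n → D (n + 1) = h (D n))
    (L : ℝ) (hconv : Filter.Tendsto D Filter.atTop (nhds L)) :
    h L = L := by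
  by_cases HA : ∀ N : ℕ, ∃ n, N ≤ n ∧ D n < L
  · -- Case A: D n < L infinitely often; build a monotone subsequence increasing to L
    have key : ∀ a : ℝ, a < L → ∀ m : ℕ, ∀ ε : ℝ, 0 < ε →
        ∃ n, m ≤ n ∧ a < D n ∧ L - ε < D n ∧ D n < L := by
      intro a ha m ε hε
      have hc : max a (L - ε) < L := by
        apply max_lt ha; linarith
      have h1 : ∀ᶠ n in Filter.atTop, max a (L - ε) < D n :=
        hconv.eventually (eventually_gt_nhds hc)
      obtain ⟨N₀, hN₀⟩ := Filter.eventually_atTop.mp h1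
      obtain ⟨n, hn1, hn2⟩ := HA (max m N₀)
      refine ⟨n, le_trans (le_max_left _ _) hn1, ?_, ?_, hn2⟩
      · exact lt_of_le_of_lt (le_max_left _ _) (hN₀ n (le_trans (le_max_right _ _) hn1))
      · exact lt_of_le_of_lt (le_max_right _ _) (hN₀ n (le_trans (le_max_right _ _) hn1))
    choose! F hF1 hF2 hF3 hF4 using key
    obtain ⟨n₀, hn₀1, hn₀2⟩ := HA 1
    obtain ⟨f, hf0, hfs⟩ :
        ∃ f : ℕ → ℕ, f 0 = n₀ ∧ ∀ k, f (k + 1) = F (D (f k)) (f k + 1) (1 / (k + 1)) :=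
      ⟨fun k => Nat.rec n₀ (fun k fk => F (D fk) (fk + 1) (1 / (k + 1))) k, rfl, fun k => rfl⟩
    have hinv : ∀ k, D (f k) < L ∧ 1 ≤ f k := by
      intro k
      induction k with
      | zero => rw [hf0]; exact ⟨hn₀2, hn₀1⟩
      | succ k ih =>
        have hεpos : (0 : ℝ) < 1 / (k + 1) := by positivity
        constructor
        · rw [hfs]; exact hF4 (D (f k)) ih.1 (f k + 1) (1 / (k + 1)) hεpos
        · rw [hfs]
          have := hF1 (D (f k)) ih.1 (f k + 1) (1 / (k + 1)) hεpos
          omega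
    have hfmono : StrictMono f := by
      apply strictMono_nat_of_lt_succ
      intro k
      have hεpos : (0 : ℝ) < 1 / (k + 1) := by positivity
      have := hF1 (D (f k)) (hinv k).1 (f k + 1) (1 / (k + 1)) hεpos
      rw [hfs]; omega
    have hxmono : Monotone (fun k => D (f k)) := by
      apply monotone_nat_of_le_succ
      intro k
      have hεpos : (0 : ℝ) < 1 / (k + 1) := by positivity
      have := hF2 (D (f k)) (hinv k).1 (f k + 1) (1 / (k + 1)) hεpos
      rw [hfs]; exact le_of_lt this
    have hxL : Filter.Tendsto (fun k => D (f k)) Filter.atTop (nhds L) := by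
      rw [← Filter.tendsto_add_atTop_iff_nat 1]
      have hlow : Filter.Tendsto (fun k : ℕ => L - 1 / ((k : ℝ) + 1)) Filter.atTop (nhds L) := by
        have h0 : Filter.Tendsto (fun k : ℕ => 1 / ((k : ℝ) + 1)) Filter.atTop (nhds 0) :=
          tendsto_one_div_add_atTop_nhds_zero_nat
        have h1 : Filter.Tendsto (fun _ : ℕ => L) Filter.atTop (nhds L) := tendsto_const_nhds
        simpa using h1.sub h0
      apply tendsto_of_tendsto_of_tendsto_of_le_of_le hlow tendsto_const_nhds
      · intro k
        have hεpos : (0 : ℝ) < 1 / (k + 1) := by positivity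
        have := hF3 (D (f k)) (hinv k).1 (f k + 1) (1 / (k + 1)) hεpos
        show L - 1 / ((k : ℝ) + 1) ≤ D (f (k + 1))
        rw [hfs]
        linarith
      · intro k
        exact le_of_lt (hinv (k + 1)).1
    have h1 := hlc L (fun k => D (f k)) hxmono hxL
    have hfa : Filter.Tendsto (fun k => f k + 1) Filter.atTop Filter.atTop :=
      Filter.tendsto_atTop_mono (fun k => Nat.le_succ (f k)) hfmono.tendsto_atTop
    have h2 : Filter.Tendsto (fun k => D (f k + 1)) Filter.atTop (nhds L) :=
      hconv.comp hfa
    have heq : (fun k => h (D (f k))) = fun k => D (f k + 1) := by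
      funext k
      exact (hrec (f k) (hinv k).2).symm
    rw [heq] at h1
    exact tendsto_nhds_unique h1 h2
  · -- Case B: eventually D n ≥ L
    obtain ⟨N, hge⟩ : ∃ N, ∀ n, N ≤ n → L ≤ D n := by
      rcases not_forall.mp HA with ⟨N, hN⟩
      refine ⟨N, fun n hn => ?_⟩
      by_contra hcon
      exact hN ⟨n, hn, lt_of_not_ge hcon⟩
    have hxle : ∀ x : ℝ, L < x → h x ≤ L := by
      intro x hx
      have hev : ∀ᶠ n in Filter.atTop, D n < x := hconv.eventually (eventually_lt_nhds hx)
      obtain ⟨M, hM⟩ := Filter.eventually_atTop.mp hev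
      have h2 : Filter.Tendsto (fun n => D (n + 1)) Filter.atTop (nhds L) := by
        rw [Filter.tendsto_add_atTop_iff_nat 1]; exact hconv
      apply ge_of_tendsto h2
      rw [Filter.eventually_atTop]
      refine ⟨max M 1, fun n hn => ?_⟩
      rw [hrec n (le_trans (le_max_right _ _) hn)]
      exact hh (le_of_lt (hM n (le_trans (le_max_left _ _) hn)))
    have hfreq : ∀ M : ℕ, ∃ n, M ≤ n ∧ 1 ≤ n ∧ D n = L := by
      intro M
      set m := max M (max N 1) with hm
      have hmN : N ≤ m := le_trans (le_max_left _ _) (le_max_right _ _)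
      have hm1 : 1 ≤ m := le_trans (le_max_right _ _) (le_max_right _ _)
      rcases eq_or_lt_of_le (hge m hmN) with heq | hlt
      · exact ⟨m, le_max_left _ _, hm1, heq.symm⟩
      · refine ⟨m + 1, le_trans (le_max_left _ _) (Nat.le_succ m), by omega, ?_⟩
        have h1 : D (m + 1) = h (D m) := hrec m hm1
        have h2 : h (D m) ≤ L := hxle (D m) hlt
        have h3 : L ≤ D (m + 1) := hge (m + 1) (by omega)
        rw [h1] at h3 ⊢
        linarith
    have hfreq' : ∃ᶠ n in Filter.atTop, 1 ≤ n ∧ D n = L := by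
      rw [Filter.frequently_atTop]
      intro a
      obtain ⟨n, hn1, hn2, hn3⟩ := hfreq a
      exact ⟨n, hn1, hn2, hn3⟩
    obtain ⟨φ, hφmono, hφP⟩ := Filter.extraction_of_frequently_atTop hfreq'
    have hφa : Filter.Tendsto (fun k => φ k + 1) Filter.atTop Filter.atTop :=
      Filter.tendsto_atTop_mono (fun k => Nat.le_succ (φ k)) hφmono.tendsto_atTop
    have h2 : Filter.Tendsto (fun k => D (φ k + 1)) Filter.atTop (nhds L) :=
      hconv.comp hφa
    have heq : (fun k => D (φ k + 1)) = fun _ => h L := by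
      funext k
      rw [hrec (φ k) (hφP k).1, (hφP k).2]
    rw [heq] at h2
    exact tendsto_nhds_unique tendsto_const_nhds h2
end

section
/- Let PTC : ℝ → ℝ be monotone increasing, left continuous, and satisfy 0 ≤ PTC(d) ≤ Q for all d, where Q > 0. Define the IRS iteration by (C₁, D₁) = (0, Q) and (C_{n+1}, D_{n+1}) = (PTC(D_n), Q − PTC(D_n)) for n ≥ 1. If (C_n, D_n) converges to a point (C, D), then C = PTC(D), D = Q − PTC(D) (so D + PTC(D) = Q), and D = max({d ∈ [0, Q] : d + PTC(d) ≤ Q}); that is, the limit of the IRS iteration, when it exists, is the largest deduction satisfying the no-double-dipping constraint. -/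
/-- Let `PTC : ℝ → ℝ` be monotone increasing, left continuous (sequential
form with monotone increasing sequences) and satisfy `0 ≤ PTC d ≤ Q` for all `d`, with
`Q > 0`. Define the IRS iteration by `(C₁, D₁) = (0, Q)` and
`(C (n+1), D (n+1)) = (PTC (D n), Q - PTC (D n))` for `n ≥ 1`. If `(C n, D n)` converges
to `(C, D)`, then `C = PTC D`, `D = Q - PTC D` (so `D + PTC D = Q`), and `D` is the
greatest element of `{d ∈ [0, Q] : d + PTC d ≤ Q}`. -/
theorem stmt_8 (Q : ℝ) (hQ : 0 < Q) (PTC : ℝ → ℝ)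
    (hmono : Monotone PTC)
    (hlc : ∀ (c : ℝ) (x : ℕ → ℝ), Monotone x →
      Filter.Tendsto x Filter.atTop (nhds c) →
      Filter.Tendsto (fun n => PTC (x n)) Filter.atTop (nhds (PTC c)))
    (hbd : ∀ d : ℝ, 0 ≤ PTC d ∧ PTC d ≤ Q)
    (C D : ℕ → ℝ) (hC1 : C 1 = 0) (hD1 : D 1 = Q)
    (hrec : ∀ n : ℕ, 1 ≤ n → C (n + 1) = PTC (D n) ∧ D (n + 1) = Q - PTC (D n))
    (Cl Dl : ℝ)
    (hconv : Filter.Tendsto (fun n => (C n, D n)) Filter.atTop (nhds (Cl, Dl))) :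
    Cl = PTC Dl ∧ Dl = Q - PTC Dl ∧ Dl + PTC Dl = Q ∧
      IsGreatest {d | d ∈ Set.Icc (0 : ℝ) Q ∧ d + PTC d ≤ Q} Dl := by
  have hD : Filter.Tendsto D Filter.atTop (nhds Dl) :=
    (continuous_snd.tendsto _).comp hconv
  have hCt : Filter.Tendsto C Filter.atTop (nhds Cl) :=
    (continuous_fst.tendsto _).comp hconv
  -- recurrence facts
  have hDrec : ∀ n : ℕ, 1 ≤ n → D (n + 1) = Q - PTC (D n) := fun n hn => (hrec n hn).2
  have hCrec : ∀ n : ℕ, 1 ≤ n → C (n + 1) = PTC (D n) := fun n hn => (hrec n hn).1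
  -- odd subsequence is decreasing: D (2k+3) ≤ D (2k+1)
  have hodd : ∀ k : ℕ, D (2 * k + 3) ≤ D (2 * k + 1) := by
    intro k
    induction k with
    | zero =>
      have h2 : D 3 = Q - PTC (D 2) := hDrec 2 (by norm_num)
      simpa [h2, hD1] using (hbd (D 2)).1
    | succ k ih =>
      have h1 : D (2 * k + 2) = Q - PTC (D (2 * k + 1)) := by
        have := hDrec (2 * k + 1) (by omega)
        convert this using 2 <;> omega
      have h2 : D (2 * k + 4) = Q - PTC (D (2 * k + 3)) := by
        have := hDrec (2 * k + 3) (by omega)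
        convert this using 2 <;> omega
      have h3 : D (2 * k + 3) = Q - PTC (D (2 * k + 2)) := by
        have := hDrec (2 * k + 2) (by omega)
        convert this using 2 <;> omega
      have h4 : D (2 * k + 5) = Q - PTC (D (2 * k + 4)) := by
        have := hDrec (2 * k + 4) (by omega)
        convert this using 2 <;> omega
      have he : D (2 * k + 2) ≤ D (2 * k + 4) := by
        rw [h1, h2]; linarith [hmono ih]
      have goal : D (2 * k + 5) ≤ D (2 * k + 3) := by
        rw [h3, h4]; linarith [hmono he]
      convert goal using 2 <;> omega
  -- even subsequence E k = D (2k+2) is monotone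
  set E : ℕ → ℝ := fun k => D (2 * k + 2) with hE
  have hEmono : Monotone E := by
    apply monotone_nat_of_le_succ
    intro k
    have h1 : D (2 * k + 2) = Q - PTC (D (2 * k + 1)) := by
      have := hDrec (2 * k + 1) (by omega)
      convert this using 2 <;> omega
    have h2 : D (2 * k + 4) = Q - PTC (D (2 * k + 3)) := by
      have := hDrec (2 * k + 3) (by omega)
      convert this using 2 <;> omega
    have hle : D (2 * k + 2) ≤ D (2 * k + 4) := by
      rw [h1, h2]; linarith [hmono (hodd k)]
    have e : 2 * (k + 1) + 2 = 2 * k + 4 := by ring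
    show D (2 * k + 2) ≤ D (2 * (k + 1) + 2)
    rw [e]; exact hle
  have hidx : Filter.Tendsto (fun k : ℕ => 2 * k + 2) Filter.atTop Filter.atTop :=
    Filter.tendsto_atTop.mpr fun b => Filter.eventually_atTop.mpr ⟨b, fun a ha => by omega⟩
  have hEtend : Filter.Tendsto E Filter.atTop (nhds Dl) := hD.comp hidx
  have hPTCE : Filter.Tendsto (fun k => PTC (E k)) Filter.atTop (nhds (PTC Dl)) :=
    hlc Dl E hEmono hEtend
  -- subsequence D (2k+3) = Q - PTC (E k) tends to Dl and to Q - PTC Dl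
  have hidx3 : Filter.Tendsto (fun k : ℕ => 2 * k + 3) Filter.atTop Filter.atTop :=
    Filter.tendsto_atTop.mpr fun b => Filter.eventually_atTop.mpr ⟨b, fun a ha => by omega⟩
  have hOdd3 : Filter.Tendsto (fun k : ℕ => D (2 * k + 3)) Filter.atTop (nhds Dl) :=
    hD.comp hidx3
  have heqD : (fun k : ℕ => D (2 * k + 3)) = fun k => Q - PTC (E k) := by
    funext k
    have h := hDrec (2 * k + 2) (by omega)
    have e : 2 * k + 2 + 1 = 2 * k + 3 := by ring
    rw [e] at h
    exact h
  have hDfix : Dl = Q - PTC Dl := by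
    have h1 : Filter.Tendsto (fun k : ℕ => D (2 * k + 3)) Filter.atTop
        (nhds (Q - PTC Dl)) := by
      rw [heqD]; exact (tendsto_const_nhds.sub hPTCE)
    exact tendsto_nhds_unique hOdd3 h1
  have hOddC : Filter.Tendsto (fun k : ℕ => C (2 * k + 3)) Filter.atTop (nhds Cl) :=
    hCt.comp hidx3
  have heqC : (fun k : ℕ => C (2 * k + 3)) = fun k => PTC (E k) := by
    funext k
    have h := hCrec (2 * k + 2) (by omega)
    have e : 2 * k + 2 + 1 = 2 * k + 3 := by ring
    rw [e] at h
    exact h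
  have hCfix : Cl = PTC Dl := by
    have h1 : Filter.Tendsto (fun k : ℕ => C (2 * k + 3)) Filter.atTop (nhds (PTC Dl)) := by
      rw [heqC]; exact hPTCE
    exact tendsto_nhds_unique hOddC h1
  refine ⟨hCfix, hDfix, by linarith, ?_⟩
  constructor
  · refine ⟨⟨?_, ?_⟩, by linarith⟩
    · have := (hbd Dl).2; linarith
    · have := (hbd Dl).1; linarith
  · intro d hd
    obtain ⟨⟨hd0, hdQ⟩, hdc⟩ := hd
    by_contra hlt
    push_neg at hlt
    have := hmono hlt.le
    linarith
end

section
/- Let h : ℝ → ℝ be antitone and left continuous, and suppose h has no fixed point (h(d) ≠ d for all d). Then for every initial value D₁, the orbit defined by D_{n+1} = h(D_n) does not converge. -/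
/-- Let `h : ℝ → ℝ` be antitone and left continuous (sequential form with
monotone increasing sequences), and suppose `h` has no fixed point. Then for every initial
value `D₁`, the orbit defined by `D (n+1) = h (D n)` does not converge. -/
theorem stmt_10 (h : ℝ → ℝ) (hh : Antitone h)
    (hlc : ∀ (c : ℝ) (x : ℕ → ℝ), Monotone x →
      Filter.Tendsto x Filter.atTop (nhds c) →
      Filter.Tendsto (fun n => h (x n)) Filter.atTop (nhds (h c)))
    (hfix : ∀ d : ℝ, h d ≠ d) :
    ∀ (D₁ : ℝ) (D : ℕ → ℝ), D 1 = D₁ →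
      (∀ n : ℕ, 1 ≤ n → D (n + 1) = h (D n)) →
      ¬ ∃ L : ℝ, Filter.Tendsto D Filter.atTop (nhds L) := by
  intro D₁ D hD1 hrec hex
  obtain ⟨L, hDL⟩ := hex
  have hshift : Filter.Tendsto (fun n => D (n + 1)) Filter.atTop (nhds L) :=
    hDL.comp (Filter.tendsto_add_atTop_nat 1)
  by_cases hA : {n : ℕ | 1 ≤ n ∧ D n = L}.Infinite
  · -- infinitely many terms equal to L
    have hfreq : ∃ᶠ n in Filter.atTop, D (n + 1) = h L := by
      rw [Filter.frequently_atTop]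
      intro a
      obtain ⟨b, hb, hab⟩ := hA.exists_gt a
      exact ⟨b, hab.le, by rw [hrec b hb.1, hb.2]⟩
    have := tendsto_nhds_unique_of_frequently_eq hshift tendsto_const_nhds hfreq
    exact hfix L this.symm
  by_cases hB : {n : ℕ | 1 ≤ n ∧ D n < L}.Infinite
  · -- infinitely many terms below L : extract a monotone subsequence
    have key : ∀ n : ℕ, ∃ m : ℕ,
        (1 ≤ n ∧ D n < L) → (n < m ∧ (1 ≤ m ∧ D m < L) ∧ D n < D m) := by
      intro n
      by_cases hn : 1 ≤ n ∧ D n < L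
      · have hev : ∀ᶠ m in Filter.atTop, D n < D m :=
          hDL.eventually (eventually_gt_nhds hn.2)
        obtain ⟨N, hN⟩ := Filter.eventually_atTop.mp hev
        obtain ⟨b, hb, hab⟩ := hB.exists_gt (max n N)
        refine ⟨b, fun _ => ⟨lt_of_le_of_lt (le_max_left _ _) hab, ⟨hb.1, hb.2⟩, ?_⟩⟩
        exact hN b (le_of_lt (lt_of_le_of_lt (le_max_right _ _) hab))
      · exact ⟨0, fun hc => absurd hc hn⟩
    choose F hF using key
    obtain ⟨n₀, hn₀⟩ := hB.nonempty
    set g : ℕ → ℕ := fun k => Nat.rec n₀ (fun _ m => F m) k with hg_def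
    have hg : ∀ k, 1 ≤ g k ∧ D (g k) < L := by
      intro k
      induction k with
      | zero => exact ⟨hn₀.1, hn₀.2⟩
      | succ k ih => exact (hF (g k) ih).2.1
    have hgs : StrictMono g :=
      strictMono_nat_of_lt_succ fun k => (hF (g k) (hg k)).1
    have hx : Monotone fun k => D (g k) :=
      monotone_nat_of_le_succ fun k => ((hF (g k) (hg k)).2.2).le
    have hxL : Filter.Tendsto (fun k => D (g k)) Filter.atTop (nhds L) :=
      hDL.comp hgs.tendsto_atTop
    have h1 := hlc L (fun k => D (g k)) hx hxL
    have h2 : Filter.Tendsto (fun k => h (D (g k))) Filter.atTop (nhds L) := by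
      have heq : (fun k => h (D (g k))) = fun k => D (g k + 1) :=
        funext fun k => (hrec (g k) (hg k).1).symm
      rw [heq]
      exact hDL.comp (Filter.tendsto_atTop_mono (fun k => Nat.le_succ (g k))
        hgs.tendsto_atTop)
    exact hfix L (tendsto_nhds_unique h1 h2)
  · -- eventually all terms are above L
    have hfinA := Set.not_infinite.mp hA
    have hfinB := Set.not_infinite.mp hB
    obtain ⟨NA, hNA⟩ := hfinA.bddAbove
    obtain ⟨NB, hNB⟩ := hfinB.bddAbove
    set N : ℕ := max NA NB + 1 with hN_def
    have hgt : ∀ n, N ≤ n → L < D n := by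
      intro n hn
      have hn1 : 1 ≤ n := le_trans (Nat.le_add_left 1 (max NA NB)) hn
      rcases lt_trichotomy (D n) L with hlt | heq | hgt
      · have : n ∈ {n : ℕ | 1 ≤ n ∧ D n < L} := ⟨hn1, hlt⟩
        have := hNB this
        omega
      · have : n ∈ {n : ℕ | 1 ≤ n ∧ D n = L} := ⟨hn1, heq⟩
        have := hNA this
        omega
      · exact hgt
    have hN1 : 1 ≤ N := Nat.le_add_left 1 (max NA NB)
    have hDN : L < D N := hgt N le_rfl
    have hev : ∀ᶠ m in Filter.atTop, D m < D N :=
      hDL.eventually (eventually_lt_nhds hDN)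
    have hle' : ∀ᶠ m in Filter.atTop, h (D N) ≤ D (m + 1) := by
      filter_upwards [hev, Filter.eventually_ge_atTop 1] with m hm hm1
      rw [hrec m hm1]
      exact hh hm.le
    have hle : h (D N) ≤ L := ge_of_tendsto hshift hle'
    have hlt : L < h (D N) := by
      have := hgt (N + 1) (Nat.le_succ N)
      rwa [hrec N hN1] at this
    exact absurd hle (not_le.mpr hlt)
end

section
/- Let Q > 0 and 0 < APTC ≤ Q be real numbers, let PTC : ℝ → ℝ be monotone increasing with 0 ≤ PTC(d) ≤ Q for all d, and let R > 0. For d with PTC(d) < APTC define the total benefit B(d) = APTC − min(APTC − PTC(d), R). Then: (i) PTC(d) ≤ B(d) < APTC; (ii) if d ≤ Q − APTC then d + B(d) < Q, so the no-double-dipping constraint is automatically satisfied with B in place of PTC; and (iii) if d + PTC(d) > Q then d + B(d) > Q. In particular, the deduction D = max({d ∈ [0, Q − APTC] : d + PTC(d) ≤ Q}), when it exists, remains the largest value in [0, Q − APTC] satisfying d + B(d) ≤ Q whenever APTC > PTC(D). -/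
/-- Let `Q > 0`, `0 < APTC ≤ Q`, `PTC : ℝ → ℝ` monotone increasing with
`0 ≤ PTC d ≤ Q` for all `d`, and `R > 0`. With the total benefit
`B d = APTC - min (APTC - PTC d) R`, for every `d` with `PTC d < APTC`:
(i) `PTC d ≤ B d < APTC`; (ii) if `d ≤ Q - APTC` then `d + B d < Q`; and
(iii) if `d + PTC d > Q` then `d + B d > Q`. In particular, the deduction
`D = max {d ∈ [0, Q - APTC] : d + PTC d ≤ Q}`, when it exists, remains the largest value
in `[0, Q - APTC]` satisfying `d + B d ≤ Q` whenever `APTC > PTC D`. -/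
theorem stmt_11 (Q APTC R : ℝ) (hQ : 0 < Q) (hAPTC0 : 0 < APTC) (hAPTCQ : APTC ≤ Q)
    (hR : 0 < R) (PTC B : ℝ → ℝ)
    (hmono : Monotone PTC) (hbd : ∀ d : ℝ, 0 ≤ PTC d ∧ PTC d ≤ Q)
    (hB : ∀ d : ℝ, B d = APTC - min (APTC - PTC d) R) :
    (∀ d : ℝ, PTC d < APTC → PTC d ≤ B d ∧ B d < APTC) ∧
    (∀ d : ℝ, PTC d < APTC → d ≤ Q - APTC → d + B d < Q) ∧
    (∀ d : ℝ, PTC d < APTC → Q < d + PTC d → Q < d + B d) ∧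
    (∀ D : ℝ, IsGreatest {d | d ∈ Set.Icc (0 : ℝ) (Q - APTC) ∧ d + PTC d ≤ Q} D →
      PTC D < APTC →
      IsGreatest {d | d ∈ Set.Icc (0 : ℝ) (Q - APTC) ∧ d + B d ≤ Q} D) := by
  have hge : ∀ d : ℝ, PTC d ≤ B d := by
    intro d
    rw [hB d]
    have : min (APTC - PTC d) R ≤ APTC - PTC d := min_le_left _ _
    linarith
  have hlt : ∀ d : ℝ, PTC d < APTC → B d < APTC := by
    intro d hd
    rw [hB d]
    have : 0 < min (APTC - PTC d) R := lt_min (by linarith) hR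
    linarith
  refine ⟨fun d hd => ⟨hge d, hlt d hd⟩, ?_, ?_, ?_⟩
  · intro d hd hdQ
    have := hlt d hd; linarith
  · intro d hd hdQ
    have := hge d; linarith
  · intro D hD hPD
    obtain ⟨⟨hDmem, hDle⟩, hub⟩ := hD
    refine ⟨⟨hDmem, ?_⟩, ?_⟩
    · have := hlt D hPD
      have := hDmem.2
      linarith
    · intro d hd
      exact hub ⟨hd.1, by have := hge d; linarith [hd.2]⟩
end
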